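/- Let α > −1 and let z be a real with 0 < z ≤ min(2, √(3(α+1))). Then J_α(z) ≥ (z/2)^α / (4·Γ(α+1)), where J_α is the Bessel function of the first kind of order α. (In particular J_α(z) > 0 on this range; this is the quantitative lower bound established in the paper's proof of its Bessel estimate for small arguments.) -/

import Mathlib

/-- The Bessel function of the first kind of order `α`, defined by its power
series (with real powers of the positive base `z/2`). -/
noncomputable def besselJ (α z : ℝ) : ℝ :=
  ∑' ν : ℕ, (-1 : ℝ) ^ ν / ((ν.factorial : ℝ) * Real.Gamma ((ν : ℝ) + α + 1)) *
    (z / 2) ^ (2 * (ν : ℝ) + α)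

/-- Auxiliary: the absolute value of the `n`-th coefficient times `x^n`. -/
noncomputable def besselG (α x : ℝ) (n : ℕ) : ℝ :=
  x ^ n / ((n.factorial : ℝ) * Real.Gamma ((n : ℝ) + α + 1))

/-- Auxiliary: the signed `n`-th term of the series in the variable `x = (z/2)^2`. -/
noncomputable def besselg (α x : ℝ) (n : ℕ) : ℝ :=
  (-1 : ℝ) ^ n / ((n.factorial : ℝ) * Real.Gamma ((n : ℝ) + α + 1)) * x ^ n

lemma besselg_eq (α x : ℝ) (n : ℕ) : besselg α x n = (-1 : ℝ) ^ n * besselG α x n := by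
  unfold besselg besselG; ring

lemma gamma_shift_pos (α : ℝ) (hα : -1 < α) (n : ℕ) :
    0 < Real.Gamma ((n : ℝ) + α + 1) := by
  apply Real.Gamma_pos_of_pos
  have : (0:ℝ) ≤ (n:ℝ) := Nat.cast_nonneg n
  linarith

lemma besselG_pos (α x : ℝ) (hα : -1 < α) (hx : 0 < x) (n : ℕ) : 0 < besselG α x n := by
  have h1 := gamma_shift_pos α hα n
  have h2 : (0:ℝ) < (n.factorial : ℝ) := by exact_mod_cast n.factorial_pos
  unfold besselG
  positivity

lemma besselG_succ (α x : ℝ) (hα : -1 < α) (n : ℕ) :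
    besselG α x (n + 1) = besselG α x n * (x / (((n : ℝ) + 1) * ((n : ℝ) + α + 1))) := by
  have h0 : (0:ℝ) ≤ (n:ℝ) := Nat.cast_nonneg n
  have h1 : (n:ℝ) + α + 1 ≠ 0 := by intro h; nlinarith
  have hg : Real.Gamma (((n + 1 : ℕ) : ℝ) + α + 1)
      = ((n:ℝ) + α + 1) * Real.Gamma ((n:ℝ) + α + 1) := by
    rw [show (((n + 1 : ℕ) : ℝ) + α + 1) = ((n:ℝ) + α + 1) + 1 by push_cast; ring,
      Real.Gamma_add_one h1]
  have hG0 := gamma_shift_pos α hα n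
  have hf : ((n + 1).factorial : ℝ) = ((n:ℝ) + 1) * (n.factorial : ℝ) := by
    rw [Nat.factorial_succ]; push_cast; ring
  have hfpos : (0:ℝ) < (n.factorial : ℝ) := by exact_mod_cast n.factorial_pos
  unfold besselG
  rw [hg, hf]
  field_simp
  ring

lemma besselg_abs (α x : ℝ) (hα : -1 < α) (hx : 0 < x) (n : ℕ) :
    |besselg α x n| = besselG α x n := by
  rw [besselg_eq, abs_mul, abs_pow, abs_neg, abs_one, one_pow, one_mul,
    abs_of_pos (besselG_pos α x hα hx n)]

lemma besselg_summable (α x : ℝ) (hα : -1 < α) (hx : 0 < x) (hx1 : x ≤ 1) :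
    Summable (besselg α x) := by
  apply summable_of_ratio_norm_eventually_le (r := 1/2) (by norm_num)
  filter_upwards [Filter.eventually_ge_atTop 1] with n hn
  rw [Real.norm_eq_abs, Real.norm_eq_abs, besselg_abs α x hα hx, besselg_abs α x hα hx,
    besselG_succ α x hα n]
  have hn' : (1:ℝ) ≤ (n:ℝ) := by exact_mod_cast hn
  have hd : (0:ℝ) < ((n:ℝ) + 1) * ((n:ℝ) + α + 1) := by nlinarith
  have hr : x / (((n:ℝ) + 1) * ((n:ℝ) + α + 1)) ≤ 1/2 := by
    rw [div_le_iff₀ hd]; nlinarith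
  have hGpos := besselG_pos α x hα hx n
  calc besselG α x n * (x / (((n:ℝ) + 1) * ((n:ℝ) + α + 1)))
      ≤ besselG α x n * (1/2) := by
        exact mul_le_mul_of_nonneg_left hr hGpos.le
    _ = 1/2 * besselG α x n := by ring

/-- The quantitative lower bound on `J_α(z)` for small arguments:
`J_α(z) ≥ (z/2)^α / (4 Γ(α+1))` for `0 < z ≤ min(2, √(3(α+1)))`. -/
theorem stmt_14 (α : ℝ) (hα : -1 < α) (z : ℝ) (hz : 0 < z)
    (hz2 : z ≤ min 2 (Real.sqrt (3 * (α + 1)))) :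
    (z / 2) ^ α / (4 * Real.Gamma (α + 1)) ≤ besselJ α z := by
  have hα1 : 0 < α + 1 := by linarith
  have hz2' : z ≤ 2 := le_trans hz2 (min_le_left _ _)
  have hz3 : z ≤ Real.sqrt (3 * (α + 1)) := le_trans hz2 (min_le_right _ _)
  set w := z / 2 with hw_def
  have hw : 0 < w := by positivity
  have hw1 : w ≤ 1 := by rw [hw_def]; linarith
  set x := w ^ 2 with hx_def
  have hx0 : 0 < x := by positivity
  have hx1 : x ≤ 1 := by rw [hx_def]; nlinarith
  have hx34 : x ≤ 3 * (α + 1) / 4 := by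
    have hs := Real.sq_sqrt (by positivity : (0:ℝ) ≤ 3 * (α + 1))
    have hsn := Real.sqrt_nonneg (3 * (α + 1))
    rw [hx_def, hw_def]
    nlinarith
  -- rewrite besselJ as w^α * tsum of besselg
  have hkey : ∀ ν : ℕ, (-1 : ℝ) ^ ν / ((ν.factorial : ℝ) * Real.Gamma ((ν : ℝ) + α + 1)) *
      w ^ (2 * (ν : ℝ) + α) = besselg α x ν * w ^ α := by
    intro ν
    have : w ^ (2 * (ν : ℝ) + α) = x ^ ν * w ^ α := by
      rw [Real.rpow_add hw, show (2 * (ν:ℝ)) = ((2 * ν : ℕ) : ℝ) by push_cast; ring,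
        Real.rpow_natCast, hx_def, pow_mul]
    rw [this]
    unfold besselg
    ring
  have hbJ : besselJ α z = (∑' ν, besselg α x ν) * w ^ α := by
    unfold besselJ
    rw [← hw_def]
    rw [tsum_congr hkey]
    exact tsum_mul_right
  have hsum := besselg_summable α x hα hx0 hx1
  have hse : Summable (fun k => besselg α x (2 * k)) :=
    hsum.comp_injective (fun a b h => by omega)
  have hso : Summable (fun k => besselg α x (2 * k + 1)) :=
    hsum.comp_injective (fun a b h => by omega)
  have hsb : Summable (fun k => besselg α x (2 * k) + besselg α x (2 * k + 1)) := hse.add hso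
  have htb : ∑' k, (besselg α x (2 * k) + besselg α x (2 * k + 1)) = ∑' n, besselg α x n := by
    rw [Summable.tsum_add hse hso]; exact tsum_even_add_odd hse hso
  -- each paired term is the (2k)-th G term times (1 - ratio)
  have hpair : ∀ k : ℕ, besselg α x (2 * k) + besselg α x (2 * k + 1)
      = besselG α x (2 * k) * (1 - x / ((((2 * k : ℕ) : ℝ) + 1) * (((2 * k : ℕ) : ℝ) + α + 1))) := by
    intro k
    have he : besselg α x (2 * k) = besselG α x (2 * k) := by
      rw [besselg_eq, pow_mul]; norm_num
    have ho : besselg α x (2 * k + 1) = -besselG α x (2 * k + 1) := by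
      rw [besselg_eq, pow_succ, pow_mul]; norm_num
    rw [he, ho, besselG_succ α x hα (2 * k)]
    ring
  have hdpos : ∀ k : ℕ, (0:ℝ) < (((2 * k : ℕ) : ℝ) + 1) * (((2 * k : ℕ) : ℝ) + α + 1) := by
    intro k
    have : (0:ℝ) ≤ ((2 * k : ℕ) : ℝ) := Nat.cast_nonneg _
    nlinarith
  have hratio : ∀ k : ℕ, x / ((((2 * k : ℕ) : ℝ) + 1) * (((2 * k : ℕ) : ℝ) + α + 1)) ≤ 1 := by
    intro k
    have hk : (0:ℝ) ≤ ((2 * k : ℕ) : ℝ) := Nat.cast_nonneg _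
    rw [div_le_one (hdpos k)]
    nlinarith [mul_nonneg hk hα1.le, sq_nonneg ((2 * k : ℕ) : ℝ)]
  have hbnn : ∀ k : ℕ, 0 ≤ besselg α x (2 * k) + besselg α x (2 * k + 1) := by
    intro k
    rw [hpair k]
    have := besselG_pos α x hα hx0 (2 * k)
    nlinarith [hratio k]
  -- lower bound on the 0-th pair
  have hΓ : 0 < Real.Gamma (α + 1) := Real.Gamma_pos_of_pos hα1
  have hb0 : 1 / (4 * Real.Gamma (α + 1)) ≤ besselg α x (2 * 0) + besselg α x (2 * 0 + 1) := by
    rw [hpair 0]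
    have hG0 : besselG α x (2 * 0) = 1 / Real.Gamma (α + 1) := by
      unfold besselG
      norm_num
    rw [hG0]
    have hr0 : x / ((((2 * 0 : ℕ) : ℝ) + 1) * (((2 * 0 : ℕ) : ℝ) + α + 1)) ≤ 3 / 4 := by
      norm_num
      rw [div_le_iff₀ hα1]
      linarith
    have h14 : (1:ℝ)/4 ≤ 1 - x / ((((2 * 0 : ℕ) : ℝ) + 1) * (((2 * 0 : ℕ) : ℝ) + α + 1)) := by
      linarith
    calc 1 / (4 * Real.Gamma (α + 1)) = 1 / Real.Gamma (α + 1) * (1/4) := by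
          field_simp
      _ ≤ 1 / Real.Gamma (α + 1) *
          (1 - x / ((((2 * 0 : ℕ) : ℝ) + 1) * (((2 * 0 : ℕ) : ℝ) + α + 1))) := by
          apply mul_le_mul_of_nonneg_left h14
          positivity
  have hS : 1 / (4 * Real.Gamma (α + 1)) ≤ ∑' n, besselg α x n := by
    rw [← htb]
    calc 1 / (4 * Real.Gamma (α + 1)) ≤ besselg α x (2 * 0) + besselg α x (2 * 0 + 1) := hb0
      _ ≤ ∑' k, (besselg α x (2 * k) + besselg α x (2 * k + 1)) :=
          Summable.le_tsum hsb 0 (fun j _ => hbnn j)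
  rw [hbJ]
  have hwα : 0 < w ^ α := Real.rpow_pos_of_pos hw α
  calc w ^ α / (4 * Real.Gamma (α + 1)) = 1 / (4 * Real.Gamma (α + 1)) * w ^ α := by ring
    _ ≤ (∑' n, besselg α x n) * w ^ α := mul_le_mul_of_nonneg_right hS hwα.le
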